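/- Let E be a smooth real Banach space and K ⊆ C ⊆ E nonempty closed convex sets. If Q₁, Q₂ : C → K are both sunny nonexpansive retractions of C onto K, then Q₁ = Q₂. -/

import Mathlib

/-- Key lemma: if `‖w‖ ≤ ‖w + t • z‖` for small positive `t` and `j` is the unique
norming functional of `w ≠ 0`, then `j z ≥ 0`. -/
lemma key_smooth_lemma {E : Type*} [NormedAddCommGroup E] [NormedSpace ℝ E]
    (w z : E) (hw : w ≠ 0) (j : E →L[ℝ] ℝ) (hj1 : ‖j‖ = 1) (hj2 : j w = ‖w‖)
    (huniq : ∀ j' : E →L[ℝ] ℝ, (‖j'‖ = 1 ∧ j' w = ‖w‖) → j' = j)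
    (hyp : ∀ t : ℝ, 0 < t → t ≤ 1 → ‖w‖ ≤ ‖w + t • z‖) :
    0 ≤ j z := by
  rcases eq_or_ne z 0 with rfl | hz0
  · simp
  -- slope function
  set S : ℝ → E → ℝ := fun t y => (‖w + t • y‖ - ‖w‖) / t with hS
  have slope_mono : ∀ y : E, ∀ s t : ℝ, 0 < s → s ≤ t → S s y ≤ S t y := by
    intro y s t hs hst
    have ht : 0 < t := lt_of_lt_of_le hs hst
    rw [hS]
    simp only
    rw [div_le_div_iff₀ hs ht]
    have hst1 : s / t ≤ 1 := (div_le_one ht).mpr hst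
    have hst0 : (0:ℝ) ≤ s / t := by positivity
    have hcomb : w + s • y = (1 - s / t) • w + (s / t) • (w + t • y) := by
      have : (s / t) • (t • y) = s • y := by
        rw [smul_smul, div_mul_cancel₀]; exact ne_of_gt ht
      rw [smul_add, this, ← add_assoc, ← add_smul]
      norm_num
    have hnorm : ‖w + s • y‖ ≤ (1 - s / t) * ‖w‖ + (s / t) * ‖w + t • y‖ := by
      calc ‖w + s • y‖ = ‖(1 - s / t) • w + (s / t) • (w + t • y)‖ := by rw [← hcomb]
        _ ≤ ‖(1 - s / t) • w‖ + ‖(s / t) • (w + t • y)‖ := norm_add_le _ _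
        _ = |1 - s / t| * ‖w‖ + |s / t| * ‖w + t • y‖ := by
            rw [norm_smul, norm_smul, Real.norm_eq_abs, Real.norm_eq_abs]
        _ = (1 - s / t) * ‖w‖ + (s / t) * ‖w + t • y‖ := by
            rw [abs_of_nonneg (by linarith), abs_of_nonneg hst0]
    have h2 : t * ‖w + s • y‖ ≤ (t - s) * ‖w‖ + s * ‖w + t • y‖ := by
      have := mul_le_mul_of_nonneg_left hnorm (le_of_lt ht)
      calc t * ‖w + s • y‖ ≤ t * ((1 - s / t) * ‖w‖ + (s / t) * ‖w + t • y‖) := this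
        _ = (t - s) * ‖w‖ + s * ‖w + t • y‖ := by field_simp; try ring
    nlinarith
  have slope_le_norm : ∀ y : E, ∀ t : ℝ, 0 < t → S t y ≤ ‖y‖ := by
    intro y t ht
    rw [hS]; simp only
    rw [div_le_iff₀ ht]
    have := norm_add_le w (t • y)
    rw [norm_smul, Real.norm_eq_abs, abs_of_pos ht] at this
    linarith
  have slope_lb : ∀ y : E, ∀ t : ℝ, 0 < t → -‖y‖ ≤ S t y := by
    intro y t ht
    rw [hS]; simp only
    rw [le_div_iff₀ ht]
    have h1 : ‖w‖ ≤ ‖w + t • y‖ + ‖t • y‖ := by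
      have := norm_sub_le (w + t • y) (t • y)
      simpa using this
    rw [norm_smul, Real.norm_eq_abs, abs_of_pos ht] at h1
    nlinarith
  -- the sublinear functional
  set p : E → ℝ := fun y => sInf ((S · y) '' Set.Ioi (0:ℝ)) with hp
  have hne : ∀ y : E, ((S · y) '' Set.Ioi (0:ℝ)).Nonempty := fun y =>
    ⟨S 1 y, ⟨1, by norm_num⟩⟩
  have hbdd : ∀ y : E, BddBelow ((S · y) '' Set.Ioi (0:ℝ)) := by
    intro y
    refine ⟨-‖y‖, ?_⟩
    rintro a ⟨t, ht, rfl⟩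
    exact slope_lb y t ht
  have p_le_slope : ∀ y : E, ∀ t : ℝ, 0 < t → p y ≤ S t y := by
    intro y t ht
    exact csInf_le (hbdd y) ⟨t, ht, rfl⟩
  have le_p : ∀ y : E, ∀ b : ℝ, (∀ t : ℝ, 0 < t → b ≤ S t y) → b ≤ p y := by
    intro y b hb
    apply le_csInf (hne y)
    rintro a ⟨t, ht, rfl⟩
    exact hb t ht
  have p_le_norm : ∀ y : E, p y ≤ ‖y‖ := fun y => (p_le_slope y 1 one_pos).trans (slope_le_norm y 1 one_pos)
  have slope_smul : ∀ y : E, ∀ c t : ℝ, 0 < c → 0 < t → S t (c • y) = c * S (c * t) y := by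
    intro y c t hc ht
    rw [hS]; simp only
    rw [smul_smul, mul_comm t c]
    field_simp
  have p_smul_le : ∀ (c : ℝ), 0 < c → ∀ y : E, p (c • y) ≤ c * p y := by
    intro c hc y
    rw [mul_comm, ← div_le_iff₀ hc]
    apply le_p
    intro t ht
    rw [div_le_iff₀ hc]
    have h1 : S (t/c) (c • y) = c * S (c * (t/c)) y := slope_smul y c (t/c) hc (div_pos ht hc)
    rw [mul_div_cancel₀ _ (ne_of_gt hc)] at h1
    calc p (c • y) ≤ S (t/c) (c • y) := p_le_slope _ _ (div_pos ht hc)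
      _ = c * S t y := h1
      _ = S t y * c := mul_comm _ _
  have p_smul : ∀ (c : ℝ), 0 < c → ∀ y : E, p (c • y) = c * p y := by
    intro c hc y
    refine le_antisymm (p_smul_le c hc y) ?_
    have h1 := p_smul_le c⁻¹ (inv_pos.mpr hc) (c • y)
    rw [smul_smul, inv_mul_cancel₀ (ne_of_gt hc), one_smul] at h1
    calc c * p y ≤ c * (c⁻¹ * p (c • y)) := mul_le_mul_of_nonneg_left h1 hc.le
      _ = p (c • y) := by field_simp
  have p_add : ∀ y₁ y₂ : E, p (y₁ + y₂) ≤ p y₁ + p y₂ := by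
    intro y₁ y₂
    refine le_of_forall_pos_le_add ?_
    intro ε hε
    obtain ⟨a₁, ⟨t₁, ht₁, rfl⟩, ha₁⟩ := exists_lt_of_csInf_lt (hne y₁) (lt_add_of_pos_right (p y₁) (half_pos hε))
    obtain ⟨a₂, ⟨t₂, ht₂, rfl⟩, ha₂⟩ := exists_lt_of_csInf_lt (hne y₂) (lt_add_of_pos_right (p y₂) (half_pos hε))
    rw [Set.mem_Ioi] at ht₁ ht₂
    set t := min t₁ t₂ / 2 with htdef
    have ht : 0 < t := by
      rw [htdef]
      exact div_pos (lt_min ht₁ ht₂) two_pos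
    have h2t1 : 2 * t ≤ t₁ := by
      have := min_le_left t₁ t₂; rw [htdef]; linarith
    have h2t2 : 2 * t ≤ t₂ := by
      have := min_le_right t₁ t₂; rw [htdef]; linarith
    have hsub : S t (y₁ + y₂) ≤ S (2*t) y₁ + S (2*t) y₂ := by
      rw [hS]; simp only
      have hcomb : w + t • (y₁ + y₂) = (1/2 : ℝ) • (w + (2*t) • y₁) + (1/2 : ℝ) • (w + (2*t) • y₂) := by
        module
      have hnorm : ‖w + t • (y₁ + y₂)‖ ≤ (1/2) * ‖w + (2*t) • y₁‖ + (1/2) * ‖w + (2*t) • y₂‖ := by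
        rw [hcomb]
        refine (norm_add_le _ _).trans ?_
        rw [norm_smul, norm_smul]
        norm_num
      rw [← add_div, div_le_div_iff₀ ht (by positivity)]
      nlinarith
    calc p (y₁ + y₂) ≤ S t (y₁ + y₂) := p_le_slope _ t ht
      _ ≤ S (2*t) y₁ + S (2*t) y₂ := hsub
      _ ≤ S t₁ y₁ + S t₂ y₂ := add_le_add (slope_mono y₁ _ _ (by linarith) h2t1) (slope_mono y₂ _ _ (by linarith) h2t2)
      _ ≤ (p y₁ + ε/2) + (p y₂ + ε/2) := add_le_add ha₁.le ha₂.le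
      _ = p y₁ + p y₂ + ε := by ring
  -- p z ≥ 0
  have hpz : 0 ≤ p z := by
    apply le_p
    intro t ht
    rcases le_or_gt t 1 with h | h
    · have := hyp t ht h
      rw [hS]; simp only
      exact div_nonneg (by linarith) ht.le
    · refine le_trans ?_ (slope_mono z 1 t one_pos h.le)
      have := hyp 1 one_pos le_rfl
      rw [hS]; simp only
      rw [one_smul] at this ⊢
      exact div_nonneg (by linarith) zero_le_one
  -- p (-w) ≤ -‖w‖
  have hpnegw : p (-w) ≤ -‖w‖ := by
    refine (p_le_slope (-w) (1/2) (by norm_num)).trans ?_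
    rw [hS]; simp only
    have h : w + (1/2 : ℝ) • (-w) = (1/2 : ℝ) • w := by module
    rw [h, norm_smul, Real.norm_eq_abs, abs_of_pos (by norm_num : (0:ℝ) < 1/2),
      div_le_iff₀ (by norm_num : (0:ℝ) < (1/2:ℝ))]
    linarith [norm_nonneg w]
  -- Hahn-Banach extension
  set f : E →ₗ.[ℝ] ℝ := LinearPMap.mkSpanSingleton z (p z) hz0 with hf
  have hfle : ∀ x : f.domain, f x ≤ p x := by
    rintro ⟨v, hv⟩
    obtain ⟨c, rfl⟩ := Submodule.mem_span_singleton.1 hv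
    have : f ⟨c • z, hv⟩ = c • p z := LinearPMap.mkSpanSingleton'_apply _ _ _ c hv
    rw [this]
    simp only [smul_eq_mul]
    rcases lt_trichotomy c 0 with hc | hc | hc
    · have hpc : p (c • z) = (-c) * p (-z) := by
        have : c • z = (-c) • (-z) := by simp
        rw [this, p_smul (-c) (by linarith)]
      have hple : 0 ≤ p z + p (-z) := by
        have h1 := p_add z (-z)
        have h2 : (0:ℝ) ≤ p (z + -z) := by
          apply le_p; intro t ht
          rw [hS]; simp
        linarith
      rw [hpc]
      nlinarith
    · rw [hc, zero_mul, zero_smul]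
      apply le_p; intro t ht
      rw [hS]; simp
    · rw [p_smul c hc z]
  obtain ⟨g, hgext, hgle⟩ := exists_extension_of_le_sublinear f p
    (fun c hc x => p_smul c hc x) p_add hfle
  -- g is bounded
  have hgbound : ∀ x : E, ‖g x‖ ≤ 1 * ‖x‖ := by
    intro x
    rw [one_mul, Real.norm_eq_abs, abs_le]
    constructor
    · have := hgle (-x)
      have h2 := p_le_norm (-x)
      rw [map_neg] at this
      rw [norm_neg] at h2
      linarith
    · exact (hgle x).trans (p_le_norm x)
  set G : E →L[ℝ] ℝ := LinearMap.mkContinuous g 1 hgbound with hG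
  have hGw : G w = ‖w‖ := by
    have h1 : g w ≤ ‖w‖ := (hgle w).trans (p_le_norm w)
    have h2 : g (-w) ≤ -‖w‖ := (hgle (-w)).trans hpnegw
    rw [map_neg] at h2
    have : G w = g w := rfl
    rw [this]; linarith
  have hGnorm : ‖G‖ = 1 := by
    refine le_antisymm (LinearMap.mkContinuous_norm_le g zero_le_one hgbound) ?_
    have := G.le_opNorm w
    rw [hGw] at this
    have hwpos : 0 < ‖w‖ := norm_pos_iff.2 hw
    calc (1:ℝ) = ‖w‖ / ‖w‖ := by rw [div_self (ne_of_gt hwpos)]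
      _ ≤ ‖G‖ * ‖w‖ / ‖w‖ := by gcongr; simpa using this
      _ = ‖G‖ := by rw [mul_div_assoc, div_self (ne_of_gt hwpos), mul_one]
  have hGj : G = j := huniq G ⟨hGnorm, hGw⟩
  -- conclude
  have hGz : G z = p z := by
    have hmem : z ∈ f.domain := by
      rw [hf]
      exact Submodule.mem_span_singleton_self z
    have := hgext ⟨z, hmem⟩
    have h2 : f ⟨z, hmem⟩ = p z := LinearPMap.mkSpanSingleton_apply ℝ ℝ hz0 (p z)
    rw [h2] at this
    exact this
  rw [← hGj, hGz]
  exact hpz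

theorem sunny_nonexpansive_retraction_unique
    {E : Type*} [NormedAddCommGroup E] [NormedSpace ℝ E] [CompleteSpace E]
    (hsmooth : ∀ x : E, x ≠ 0 → ∃! j : E →L[ℝ] ℝ, ‖j‖ = 1 ∧ j x = ‖x‖)
    (K C : Set E) (hKC : K ⊆ C)
    (hKne : K.Nonempty) (hKcl : IsClosed K) (hKconv : Convex ℝ K)
    (hCne : C.Nonempty) (hCcl : IsClosed C) (hCconv : Convex ℝ C)
    (Q₁ Q₂ : E → E)
    (hQ₁maps : Set.MapsTo Q₁ C K) (hQ₂maps : Set.MapsTo Q₂ C K)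
    (hQ₁ret : ∀ x ∈ K, Q₁ x = x) (hQ₂ret : ∀ x ∈ K, Q₂ x = x)
    (hQ₁ne : ∀ x ∈ C, ∀ y ∈ C, ‖Q₁ x - Q₁ y‖ ≤ ‖x - y‖)
    (hQ₂ne : ∀ x ∈ C, ∀ y ∈ C, ‖Q₂ x - Q₂ y‖ ≤ ‖x - y‖)
    (hQ₁sunny : ∀ x ∈ C, ∀ α ∈ Set.Icc (0:ℝ) 1,
      Q₁ (α • x + (1 - α) • Q₁ x) = Q₁ x)
    (hQ₂sunny : ∀ x ∈ C, ∀ α ∈ Set.Icc (0:ℝ) 1,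
      Q₂ (α • x + (1 - α) • Q₂ x) = Q₂ x) :
    Set.EqOn Q₁ Q₂ C := by
  intro x hx
  by_contra hne'
  set u := Q₁ x with hu
  set v := Q₂ x with hv
  have huK : u ∈ K := hQ₁maps hx
  have hvK : v ∈ K := hQ₂maps hx
  have huC : u ∈ C := hKC huK
  have hvC : v ∈ C := hKC hvK
  have hw : u - v ≠ 0 := sub_ne_zero.mpr hne'
  obtain ⟨j, ⟨hj1, hj2⟩, hjuniq⟩ := hsmooth (u - v) hw
  -- variational inequality for Q₁
  have hineq1 : ∀ t : ℝ, 0 < t → t ≤ 1 → ‖u - v‖ ≤ ‖(u - v) + t • (x - u)‖ := by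
    intro t ht ht1
    have hxtC : t • x + (1 - t) • u ∈ C := hCconv hx huC ht.le (by linarith) (by ring)
    have hQxt : Q₁ (t • x + (1 - t) • u) = u := hQ₁sunny x hx t ⟨ht.le, ht1⟩
    have h2 := hQ₁ne _ hxtC v hvC
    rw [hQxt, hQ₁ret v hvK] at h2
    refine h2.trans_eq ?_
    congr 1
    module
  have hineq2 : ∀ t : ℝ, 0 < t → t ≤ 1 → ‖v - u‖ ≤ ‖(v - u) + t • (x - v)‖ := by
    intro t ht ht1
    have hxtC : t • x + (1 - t) • v ∈ C := hCconv hx hvC ht.le (by linarith) (by ring)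
    have hQxt : Q₂ (t • x + (1 - t) • v) = v := hQ₂sunny x hx t ⟨ht.le, ht1⟩
    have h2 := hQ₂ne _ hxtC u huC
    rw [hQxt, hQ₂ret u huK] at h2
    refine h2.trans_eq ?_
    congr 1
    module
  have hpos1 : 0 ≤ j (x - u) :=
    key_smooth_lemma (u - v) (x - u) hw j hj1 hj2 (fun j' h => hjuniq j' h) hineq1
  -- -j is the unique norming functional of v - u
  have hw' : v - u ≠ 0 := sub_ne_zero.mpr (Ne.symm hne')
  have hnegj1 : ‖-j‖ = 1 := by rw [norm_neg]; exact hj1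
  have hnegj2 : (-j) (v - u) = ‖v - u‖ := by
    have : (v : E) - u = -(u - v) := by abel
    rw [this]
    simp only [ContinuousLinearMap.neg_apply, map_neg, neg_neg]
    rw [hj2, norm_neg]
  have huniq' : ∀ j' : E →L[ℝ] ℝ, (‖j'‖ = 1 ∧ j' (v - u) = ‖v - u‖) → j' = -j := by
    intro j' ⟨h1, h2⟩
    have h3 : (-j') (u - v) = ‖u - v‖ := by
      have hvu : (u : E) - v = -(v - u) := by abel
      rw [hvu]
      simp only [ContinuousLinearMap.neg_apply, map_neg, neg_neg]
      rw [h2, norm_neg]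
    have h4 : -j' = j := hjuniq (-j') ⟨by rw [norm_neg]; exact h1, h3⟩
    rw [← h4, neg_neg]
  have hpos2 : 0 ≤ (-j) (x - v) :=
    key_smooth_lemma (v - u) (x - v) hw' (-j) hnegj1 hnegj2 huniq' hineq2
  -- contradiction
  simp only [ContinuousLinearMap.neg_apply] at hpos2
  have hkey : j (u - v) ≤ 0 := by
    have h1 : (u : E) - v = (x - v) - (x - u) := by abel
    rw [h1, map_sub]
    linarith
  rw [hj2] at hkey
  have : 0 < ‖u - v‖ := norm_pos_iff.2 hw
  linarith
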